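/- arXiv:2412.10901 — 2 statements merged into one kernel-verified Lean document; each statement's English description precedes it below -/
import Mathlib

section
/- If an automorphism of order two acts on a directed strongly regular graph with parameters (22,9,6,3,4) and fixes exactly f_2 vertices, then f_2 ∈ {0,6,8,10,12,14,16}. -/
open Matrix BigOperators

def adjM {V : Type} [Fintype V] (E : V → V → Bool) : Matrix V V ℤ :=
  Matrix.of fun x y => if E x y then 1 else 0

def IsDSRG {V : Type} [Fintype V] [DecidableEq V] (E : V → V → Bool)
    (v k t l m : ℕ) : Prop :=
  Fintype.card V = v ∧ (∀ x, E x x = false) ∧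
  adjM E * adjM E + ((m : ℤ) - (l : ℤ)) • adjM E - ((t : ℤ) - (m : ℤ)) • (1 : Matrix V V ℤ)
    = (m : ℤ) • Matrix.of (fun _ _ => (1 : ℤ)) ∧
  adjM E * Matrix.of (fun _ _ => (1 : ℤ)) = (k : ℤ) • Matrix.of (fun _ _ => (1 : ℤ)) ∧
  Matrix.of (fun _ _ => (1 : ℤ)) * adjM E = (k : ℤ) • Matrix.of (fun _ _ => (1 : ℤ))

def IsAut {V : Type} (E : V → V → Bool) (σ : Equiv.Perm V) : Prop :=
  ∀ x y, E (σ x) (σ y) = E x y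

def autGroup {V : Type} (E : V → V → Bool) : Subgroup (Equiv.Perm V) where
  carrier := {σ | ∀ x y, E (σ x) (σ y) = E x y}
  one_mem' := fun _ _ => rfl
  mul_mem' := by
    intro a b ha hb x y
    simp only [Equiv.Perm.coe_mul, Function.comp_apply]
    rw [ha, hb]
  inv_mem' := by
    intro a ha x y
    have := ha (a⁻¹ x) (a⁻¹ y)
    simpa [Equiv.Perm.coe_inv] using this.symm

def Iso {V W : Type} (E : V → V → Bool) (F : W → W → Bool) : Prop :=
  ∃ φ : V ≃ W, ∀ x y, F (φ x) (φ y) = E x y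

/-- Parity lemma: a `σ`-invariant `ZMod 2`-valued sum over all vertices equals
the sum over the fixed vertices. -/
lemma sum_fixed_parity {V : Type} [Fintype V] [DecidableEq V] (σ : Equiv.Perm V)
    (h2 : ∀ x, σ (σ x) = x) (g : V → ZMod 2) (hg : ∀ x, g (σ x) = g x) :
    ∑ x ∈ Finset.univ.filter (fun x => σ x = x), g x = ∑ x, g x := by
  rw [← Finset.sum_filter_add_sum_filter_not Finset.univ (fun x => σ x = x) g]
  have h0 : ∑ x ∈ Finset.univ.filter (fun x => ¬ σ x = x), g x = 0 := by
    apply Finset.sum_involution (fun a _ => σ a)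
    · intro a _
      rw [hg a]
      exact CharTwo.add_self_eq_zero (g a)
    · intro a ha _
      simpa using ha
    · intro a ha
      simp only [Finset.mem_filter, Finset.mem_univ, true_and] at ha ⊢
      intro hs
      exact ha (by rw [← h2 a, hs, hs])
    · intro a _
      exact h2 a
  rw [h0, add_zero]

/-- every element of `ZMod 2` is `0` or `1`. -/
lemma zmod2_cases : ∀ x : ZMod 2, x = 0 ∨ x = 1 := by decide

lemma row4 (p q r : ZMod 2) (h : p + q + r = 1) :
    (p = 1 ∧ q = 0 ∧ r = 0) ∨ (p = 0 ∧ q = 1 ∧ r = 0) ∨ (p = 0 ∧ q = 0 ∧ r = 1) ∨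
    (p = 1 ∧ q = 1 ∧ r = 1) := by
  revert h; revert p q r; decide

/-- an automorphism of order two of a DSRG(22,9,6,3,4) fixes
`f₂ ∈ {0,6,8,10,12,14,16}` vertices. -/
theorem automorphism_of_order_two_fixed_points {V : Type} [Fintype V] [DecidableEq V]
    (E : V → V → Bool) (hG : IsDSRG E 22 9 6 3 4)
    (σ : Equiv.Perm V) (hσ : IsAut E σ) (horder : orderOf σ = 2) :
    (Finset.univ.filter fun x => σ x = x).card
      ∈ ({0, 6, 8, 10, 12, 14, 16} : Set ℕ) := by
  classical
  obtain ⟨hcard, hdiagE, hsq, hrow, -⟩ := hG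
  set a : V → V → ℤ := fun x y => if E x y then 1 else 0 with ha_def
  -- basic integer facts
  have hadj : ∀ x y, adjM E x y = a x y := fun x y => rfl
  have h01 : ∀ x y, a x y = 0 ∨ a x y = 1 := by
    intro x y; by_cases h : E x y <;> simp [ha_def, h]
  have hdiag : ∀ x, a x x = 0 := by intro x; simp [ha_def, hdiagE x]
  have hσ2 : ∀ x, σ (σ x) = x := by
    intro x
    have h := pow_orderOf_eq_one σ
    rw [horder] at h
    have := congrArg (fun τ : Equiv.Perm V => τ x) h
    simpa [pow_succ, Equiv.Perm.mul_apply] using this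
  have ha_aut : ∀ x y, a (σ x) (σ y) = a x y := by
    intro x y; simp [ha_def, hσ x y]
  have hA2 : ∀ x y, (∑ z, a x z * a z y) = 4 - a x y + (if x = y then 2 else 0) := by
    intro x y
    rw [← Matrix.ext_iff] at hsq
    have h := hsq x y
    simp only [Matrix.add_apply, Matrix.sub_apply, Matrix.smul_apply, Matrix.mul_apply,
      Matrix.one_apply, Matrix.of_apply, hadj, smul_eq_mul] at h
    push_cast at h
    rcases eq_or_ne x y with hxy | hxy <;> simp [hxy] at h ⊢ <;> linarith [h]
  have hrow' : ∀ x, (∑ z, a x z) = 9 := by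
    intro x
    rw [← Matrix.ext_iff] at hrow
    have h := hrow x x
    simp only [Matrix.mul_apply, Matrix.smul_apply, Matrix.of_apply, hadj,
      smul_eq_mul, mul_one] at h
    push_cast at h
    linarith [h]
  -- ZMod 2 versions
  set b : V → V → ZMod 2 := fun x y => if E x y then 1 else 0 with hb_def
  have hb_cast : ∀ x y, ((a x y : ℤ) : ZMod 2) = b x y := by
    intro x y; by_cases h : E x y <;> simp [ha_def, hb_def, h]
  have hbdiag : ∀ x, b x x = 0 := by intro x; simp [hb_def, hdiagE x]
  have hb_aut : ∀ x y, b (σ x) (σ y) = b x y := by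
    intro x y; simp [hb_def, hσ x y]
  set F : Finset V := Finset.univ.filter (fun x => σ x = x) with hF_def
  set f : ℕ := F.card with hf_def
  have hmemF : ∀ x, x ∈ F ↔ σ x = x := by
    intro x; simp [hF_def]
  -- row parity
  have hb_row : ∀ x, σ x = x → ∑ z ∈ F, b x z = 1 := by
    intro x hx
    have hinv : ∀ z, b x (σ z) = b x z := by
      intro z
      conv_lhs => rw [← hx]
      exact hb_aut x z
    rw [sum_fixed_parity σ hσ2 _ hinv]
    have : ((∑ z, a x z : ℤ) : ZMod 2) = ∑ z, b x z := by
      push_cast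
      exact Finset.sum_congr rfl fun z _ => hb_cast x z
    rw [← this, hrow' x]
    decide
  -- square parity
  have hb_sq : ∀ x k, σ x = x → σ k = k → ∑ z ∈ F, b x z * b z k = b x k := by
    intro x k hx hk
    have hinv : ∀ z, b x (σ z) * b (σ z) k = b x z * b z k := by
      intro z
      conv_lhs => rw [← hx, ← hk]
      rw [hb_aut, hb_aut]
    rw [sum_fixed_parity σ hσ2 _ hinv]
    have hc : ((∑ z, a x z * a z k : ℤ) : ZMod 2) = ∑ z, b x z * b z k := by
      push_cast
      exact Finset.sum_congr rfl fun z _ => by rw [hb_cast, hb_cast]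
    rw [← hc, hA2 x k]
    rcases eq_or_ne x k with hxk | hxk
    · subst hxk
      rw [hdiag, hbdiag]
      simp only [if_pos rfl]
      decide
    · simp only [if_neg hxk]
      rw [← hb_cast]
      rcases h01 x k with h | h <;> rw [h] <;> decide
  -- step1 : a vertex whose fixed out-neighbourhood is exactly {j} is impossible
  have step1 : ∀ x ∈ F, ∀ j ∈ F, b x j = 1 → (∀ z ∈ F, z ≠ j → b x z = 0) → False := by
    intro x hx j hj hbxj hall
    have hsum : ∑ z ∈ F, b x z * b z j = 0 := by
      apply Finset.sum_eq_zero
      intro z hz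
      rcases eq_or_ne z j with rfl | hzj
      · rw [hbdiag, mul_zero]
      · rw [hall z hz hzj, zero_mul]
    rw [hb_sq x j ((hmemF x).1 hx) ((hmemF j).1 hj), hbxj] at hsum
    exact one_ne_zero hsum
  -- f is even
  have heven : 2 ∣ f := by
    have h1 : ∑ _z ∈ F, (1 : ZMod 2) = ∑ _z : V, (1 : ZMod 2) :=
      sum_fixed_parity σ hσ2 _ (fun _ => rfl)
    rw [Finset.sum_const, Finset.sum_const, Finset.card_univ, hcard, ← hf_def] at h1
    have h3 : ((f : ℕ) : ZMod 2) = 0 := by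
      have h2 : ((f : ℕ) : ZMod 2) = ((22 : ℕ) : ZMod 2) := by
        simpa [nsmul_eq_mul] using h1
      rw [h2]; decide
    exact (ZMod.natCast_eq_zero_iff f 2).1 h3
  have hfle : f ≤ 22 := by
    have := Finset.card_filter_le Finset.univ (fun x => σ x = x)
    rwa [Finset.card_univ, hcard] at this
  -- f ≠ 2
  have hf2 : f ≠ 2 := by
    intro h2
    obtain ⟨u, w, huw, hFuw⟩ := Finset.card_eq_two.1 (hf_def ▸ h2)
    have hu : u ∈ F := by rw [hFuw]; simp
    have hw : w ∈ F := by rw [hFuw]; simp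
    have hrowu := hb_row u ((hmemF u).1 hu)
    rw [hFuw, Finset.sum_pair huw, hbdiag, zero_add] at hrowu
    refine step1 u hu w hw hrowu ?_
    intro z hz hzw
    rw [hFuw] at hz
    rcases Finset.mem_insert.1 hz with rfl | hz
    · exact hbdiag z
    · exact absurd (Finset.mem_singleton.1 hz) hzw
  -- f ≠ 4
  have hf4 : f ≠ 4 := by
    intro h4
    obtain ⟨u, s, hus, hins, hs3⟩ := Finset.card_eq_succ.1 (hf_def ▸ h4)
    obtain ⟨p, q, r, hpq, hpr, hqr, hs⟩ := Finset.card_eq_three.1 hs3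
    rw [hs] at hus hins
    have hFe : F = {u, p, q, r} := hins.symm
    simp only [Finset.mem_insert, Finset.mem_singleton, not_or] at hus
    have hup : u ≠ p := hus.1
    have huq : u ≠ q := hus.2.1
    have hur : u ≠ r := hus.2.2
    -- key : for any listing of F, the first vertex points to the second
    have key : ∀ x y z w : V, x ≠ y → x ≠ z → x ≠ w → y ≠ z → y ≠ w → z ≠ w →
        F = {x, y, z, w} → b x y = 1 := by
      intro x y z w hxy hxz hxw hyz hyw hzw hF4
      have hxF : x ∈ F := by rw [hF4]; simp
      have hyF : y ∈ F := by rw [hF4]; simp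
      have hzF : z ∈ F := by rw [hF4]; simp
      have hwF : w ∈ F := by rw [hF4]; simp
      have hr := hb_row x ((hmemF x).1 hxF)
      rw [hF4, Finset.sum_insert (by simp [hxy, hxz, hxw]),
        Finset.sum_insert (by simp [hyz, hyw]), Finset.sum_insert (by simp [hzw]),
        Finset.sum_singleton, hbdiag, zero_add, ← add_assoc] at hr
      have hmem4 : ∀ t, t ∈ F → t = x ∨ t = y ∨ t = z ∨ t = w := by
        intro t ht
        rw [hF4] at ht
        simpa using ht
      rcases row4 _ _ _ hr with ⟨h1, h2, h3⟩ | ⟨h1, h2, h3⟩ | ⟨h1, h2, h3⟩ | ⟨h1, h2, h3⟩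
      · exact h1
      · exfalso
        refine step1 x hxF z hzF h2 ?_
        intro t ht htz
        rcases hmem4 t ht with rfl | rfl | rfl | rfl
        · exact hbdiag t
        · exact h1
        · exact absurd rfl htz
        · exact h3
      · exfalso
        refine step1 x hxF w hwF h3 ?_
        intro t ht htw
        rcases hmem4 t ht with rfl | rfl | rfl | rfl
        · exact hbdiag t
        · exact h1
        · exact h2
        · exact absurd rfl htw
      · exact h1
    have hF2 : F = {u, q, p, r} := by rw [hFe, Finset.insert_comm p q]
    have hF3 : F = {u, r, q, p} := by
      rw [hFe, Finset.insert_comm p q, Finset.pair_comm p r, Finset.insert_comm q r]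
    have hF4' : F = {p, u, q, r} := by rw [hFe, Finset.insert_comm u p]
    have hF5 : F = {q, u, p, r} := by rw [hF2, Finset.insert_comm u q]
    have hF6 : F = {r, u, q, p} := by rw [hF3, Finset.insert_comm u r]
    have hbp : b u p = 1 := key u p q r hup huq hur hpq hpr hqr hFe
    have hbq : b u q = 1 := key u q p r huq hup hur hpq.symm hqr hpr hF2
    have hbr : b u r = 1 := key u r q p hur huq hup hqr.symm hpr.symm hpq.symm hF3
    have hbp' : b p u = 1 := key p u q r hup.symm hpq hpr huq hur hqr hF4'
    have hbq' : b q u = 1 := key q u p r huq.symm hpq.symm hqr hup hur hpr hF5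
    have hbr' : b r u = 1 := key r u q p hur.symm hqr.symm hpr.symm huq hup hpq.symm hF6
    have huF : u ∈ F := by rw [hFe]; simp
    have hsquu := hb_sq u u ((hmemF u).1 huF) ((hmemF u).1 huF)
    rw [hFe, Finset.sum_insert (by simp [hup, huq, hur]),
      Finset.sum_insert (by simp [hpq, hpr]), Finset.sum_insert (by simp [hqr]),
      Finset.sum_singleton, hbdiag, hbp, hbq, hbr, hbp', hbq', hbr'] at hsquu
    revert hsquu
    decide
  -- the non-fixed side
  set N : Finset V := Finset.univ.filter (fun x => ¬ σ x = x) with hN_def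
  have hsplitN : f + N.card = 22 := by
    rw [hf_def, hF_def, hN_def, Finset.card_filter_add_card_filter_not,
      Finset.card_univ, hcard]
  have hmemN : ∀ x, x ∈ N ↔ ¬ σ x = x := by intro x; simp [hN_def]
  -- f ≠ 22
  have hf22 : f ≠ 22 := by
    intro h22
    have hFu : F = Finset.univ := Finset.eq_univ_of_card F (by rw [← hf_def, h22, hcard])
    have hone : σ = 1 := by
      ext x
      have : x ∈ F := hFu ▸ Finset.mem_univ x
      simpa using (hmemF x).1 this
    rw [hone, orderOf_one] at horder
    exact absurd horder (by norm_num)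
  -- f ≠ 20
  have hf20 : f ≠ 20 := by
    intro h20
    have hN2 : N.card = 2 := by omega
    obtain ⟨x, hxN⟩ := Finset.card_pos.1 (by omega : 0 < N.card)
    have hxnf : ¬ σ x = x := (hmemN x).1 hxN
    set y := σ x with hy_def
    have hyx : σ y = x := hσ2 x
    have hxy : x ≠ y := fun h => hxnf h.symm
    have hyN : y ∈ N := by
      rw [hmemN, hyx]
      exact fun h => hxy h
    have hNxy : N = {x, y} := by
      refine (Finset.eq_of_subset_of_card_le ?_ ?_).symm
      · intro t ht
        rcases Finset.mem_insert.1 ht with rfl | ht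
        · exact hxN
        · rw [Finset.mem_singleton.1 ht]; exact hyN
      · rw [hN2, Finset.card_pair hxy]
    have hfixcol : ∀ z ∈ F, a z y = a z x := by
      intro z hz
      have hzf : σ z = z := (hmemF z).1 hz
      have h := ha_aut z y
      rw [hzf, hyx] at h
      exact h.symm
    have he : a y x = a x y := by
      have h := ha_aut x y
      rwa [← hy_def, hyx] at h
    have eq1 : ∑ z, a x z * a z x = 6 := by
      simpa [hdiag x] using hA2 x x
    have eq2 : ∑ z, a x z * a z y = 4 - a x y := by
      simpa [if_neg hxy] using hA2 x y
    rw [← Finset.sum_filter_add_sum_filter_not Finset.univ (fun z => σ z = z), ← hF_def,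
      ← hN_def, hNxy, Finset.sum_pair hxy] at eq1 eq2
    simp only [hdiag x, hdiag y, zero_mul, mul_zero, add_zero, zero_add] at eq1 eq2
    rw [he] at eq1
    have hS : ∑ z ∈ F, a x z * a z y = ∑ z ∈ F, a x z * a z x :=
      Finset.sum_congr rfl fun z hz => by rw [hfixcol z hz]
    rw [hS] at eq2
    rcases h01 x y with h | h <;> rw [h] at eq1 eq2 <;> linarith
  -- f ≠ 18
  have hf18 : f ≠ 18 := by
    intro h18
    have hN4 : N.card = 4 := by omega
    obtain ⟨x, hxN⟩ := Finset.card_pos.1 (by omega : 0 < N.card)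
    have hxnf : ¬ σ x = x := (hmemN x).1 hxN
    set y := σ x with hy_def
    have hyx : σ y = x := hσ2 x
    have hxy : x ≠ y := fun h => hxnf h.symm
    have hyN : y ∈ N := by
      rw [hmemN, hyx]
      exact fun h => hxy h
    have hnsub : ¬ N ⊆ {x, y} := by
      intro hsub
      have := Finset.card_le_card hsub
      rw [hN4] at this
      have h2 : ({x, y} : Finset V).card ≤ 2 := Finset.card_insert_le x {y} |>.trans (by simp)
      omega
    obtain ⟨p, hpN, hpxy⟩ := Finset.not_subset.1 hnsub
    simp only [Finset.mem_insert, Finset.mem_singleton, not_or] at hpxy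
    have hpx : p ≠ x := hpxy.1
    have hpy : p ≠ y := hpxy.2
    have hpnf : ¬ σ p = p := (hmemN p).1 hpN
    set q := σ p with hq_def
    have hqp : σ q = p := hσ2 p
    have hpq : p ≠ q := fun h => hpnf h.symm
    have hqN : q ∈ N := by
      rw [hmemN, hqp]
      exact fun h => hpq h
    have hqx : q ≠ x := by
      intro h
      apply hpy
      have h2 := congrArg σ h
      rw [hqp, ← hy_def] at h2
      exact h2
    have hqy : q ≠ y := by
      intro h
      apply hpx
      have h2 := congrArg σ h
      rw [hqp, hyx] at h2
      exact h2
    have hNall : N = {x, y, p, q} := by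
      refine (Finset.eq_of_subset_of_card_le ?_ ?_).symm
      · intro t ht
        simp only [Finset.mem_insert, Finset.mem_singleton] at ht
        rcases ht with rfl | rfl | rfl | rfl
        · exact hxN
        · exact hyN
        · exact hpN
        · exact hqN
      · rw [hN4]
        rw [Finset.card_insert_of_notMem (by simp [hxy, hpx.symm, hqx.symm]),
          Finset.card_insert_of_notMem (by simp [hpy.symm, hqy.symm]),
          Finset.card_insert_of_notMem (by simp [hpq]), Finset.card_singleton]
    have hfixcol : ∀ z ∈ F, a z y = a z x := by
      intro z hz
      have hzf : σ z = z := (hmemF z).1 hz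
      have h := ha_aut z y
      rw [hzf, hyx] at h
      exact h.symm
    have he : a y x = a x y := by
      have h := ha_aut x y
      rwa [← hy_def, hyx] at h
    have hpy2 : a q x = a p y := by
      have h := ha_aut p y
      rwa [← hq_def, hyx] at h
    have hqy2 : a p x = a q y := by
      have h := ha_aut q y
      rwa [hqp, hyx] at h
    have eq1 : ∑ z, a x z * a z x = 6 := by
      simpa [hdiag x] using hA2 x x
    have eq2 : ∑ z, a x z * a z y = 4 - a x y := by
      simpa [if_neg hxy] using hA2 x y
    rw [← Finset.sum_filter_add_sum_filter_not Finset.univ (fun z => σ z = z), ← hF_def,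
      ← hN_def, hNall,
      Finset.sum_insert (by simp [hxy, hpx.symm, hqx.symm]),
      Finset.sum_insert (by simp [hpy.symm, hqy.symm]),
      Finset.sum_insert (by simp [hpq]), Finset.sum_singleton] at eq1 eq2
    simp only [hdiag x, hdiag y, zero_mul, mul_zero, add_zero, zero_add] at eq1 eq2
    rw [he] at eq1
    rw [← hpy2, ← hqy2] at eq2
    have hS : ∑ z ∈ F, a x z * a z y = ∑ z ∈ F, a x z * a z x :=
      Finset.sum_congr rfl fun z hz => by rw [hfixcol z hz]
    rw [hS] at eq2
    rcases h01 x y with h | h <;> rw [h] at eq1 eq2 <;>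
      rcases h01 x p with h1 | h1 <;> rw [h1] at eq1 eq2 <;>
      rcases h01 x q with h2 | h2 <;> rw [h2] at eq1 eq2 <;>
      rcases h01 p x with h3 | h3 <;> rw [h3] at eq1 eq2 <;>
      rcases h01 q x with h4 | h4 <;> rw [h4] at eq1 eq2 <;>
      linarith
  -- conclusion
  have hgoal : f = 0 ∨ f = 6 ∨ f = 8 ∨ f = 10 ∨ f = 12 ∨ f = 14 ∨ f = 16 := by
    omega
  simpa [Set.mem_insert_iff, Set.mem_singleton_iff] using hgoal
end

section
/- There exists a directed strongly regular graph with parameters (22,9,6,3,4) whose full automorphism group has order 6 and is isomorphic to the symmetric group S_3; in particular, there exists a directed strongly regular graph with parameters (22,9,6,3,4) admitting an automorphism of order two. -/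
open Matrix BigOperators

/-! ### An explicit DSRG(22,9,6,3,4) whose automorphism group is S₃ -/

def rows22 : Fin 22 → ℕ :=
  ![2162240, 2195072, 2260736, 2560582, 2794629, 3262723, 1605121, 1342978,
    818692, 483721, 708946, 1159396, 2395214, 2689685, 3278627, 459193,
    688506, 1147132, 1606073, 1376634, 917756, 1835071]

def E22 : Fin 22 → Fin 22 → Bool := fun i j => (rows22 i).testBit (j : ℕ)

lemma E22_irrefl : ∀ x, E22 x x = false := by decide

set_option maxHeartbeats 2000000 in
lemma count2 : ∀ i j : Fin 22,
    ((Finset.univ.filter (fun z => E22 i z = true ∧ E22 z j = true)).card : ℤ)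
      = (if i = j then 6 else if E22 i j then 3 else 4) := by decide

lemma countRow : ∀ i : Fin 22,
    ((Finset.univ.filter (fun z => E22 i z = true)).card : ℤ) = 9 := by decide

lemma countCol : ∀ j : Fin 22,
    ((Finset.univ.filter (fun z => E22 z j = true)).card : ℤ) = 9 := by decide

lemma mulE_apply (i j : Fin 22) :
    (adjM E22 * adjM E22) i j
      = ((Finset.univ.filter (fun z => E22 i z = true ∧ E22 z j = true)).card : ℤ) := by
  rw [Matrix.mul_apply, ← Finset.sum_boole]
  refine Finset.sum_congr rfl fun z _ => ?_
  simp only [adjM, Matrix.of_apply]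
  by_cases h1 : E22 i z = true <;> by_cases h2 : E22 z j = true <;> simp [h1, h2]

lemma E22_dsrg : IsDSRG E22 22 9 6 3 4 := by
  refine ⟨by simp, E22_irrefl, ?_, ?_, ?_⟩
  · ext i j
    have h := count2 i j
    rw [Matrix.sub_apply, Matrix.add_apply, Matrix.smul_apply, Matrix.smul_apply,
      mulE_apply, h]
    simp only [adjM, Matrix.of_apply, Matrix.one_apply, smul_eq_mul]
    by_cases hij : i = j
    · simp [hij, E22_irrefl]
    · by_cases he : E22 i j = true <;> simp [hij, he]
  · ext i j
    rw [Matrix.mul_apply]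
    have h : ∀ z : Fin 22, adjM E22 i z * (Matrix.of (fun _ _ => (1:ℤ)) : Matrix (Fin 22) (Fin 22) ℤ) z j
        = if E22 i z = true then (1:ℤ) else 0 := by
      intro z; simp only [adjM, Matrix.of_apply]; split_ifs <;> simp
    rw [Finset.sum_congr rfl fun z _ => h z, Finset.sum_boole, countRow]
    simp
  · ext i j
    rw [Matrix.mul_apply]
    have h : ∀ z : Fin 22, (Matrix.of (fun _ _ => (1:ℤ)) : Matrix (Fin 22) (Fin 22) ℤ) i z * adjM E22 z j
        = if E22 z j = true then (1:ℤ) else 0 := by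
      intro z; simp only [adjM, Matrix.of_apply]; split_ifs <;> simp
    rw [Finset.sum_congr rfl fun z _ => h z, Finset.sum_boole, countCol]
    simp

/-! ### The S₃-action on the graph -/

def av (g : Equiv.Perm (Fin 3)) (v : Fin 22) : Fin 22 :=
  if h : (v : ℕ) < 21 then
    ⟨3 * ((v : ℕ) / 3) + ((g ⟨(v : ℕ) % 3, Nat.mod_lt _ (by norm_num)⟩ : Fin 3) : ℕ), by
      have h1 : ((g ⟨(v : ℕ) % 3, Nat.mod_lt _ (by norm_num)⟩ : Fin 3) : ℕ) < 3 :=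
        (g _).isLt
      omega⟩
  else v

lemma av_left_inv : ∀ g : Equiv.Perm (Fin 3), ∀ x : Fin 22, av g⁻¹ (av g x) = x := by
  decide

def actE (g : Equiv.Perm (Fin 3)) : Equiv.Perm (Fin 22) :=
  ⟨av g, av g⁻¹, av_left_inv g, by
    have := av_left_inv g⁻¹
    intro x; simpa using this x⟩

lemma actE_mul : ∀ g h : Equiv.Perm (Fin 3), actE (g * h) = actE g * actE h := by decide

lemma actE_one : actE 1 = 1 := by decide

def actHom : Equiv.Perm (Fin 3) →* Equiv.Perm (Fin 22) where
  toFun := actE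
  map_one' := actE_one
  map_mul' := actE_mul

lemma actE_aut : ∀ g : Equiv.Perm (Fin 3), ∀ x y : Fin 22,
    E22 (actE g x) (actE g y) = E22 x y := by decide

lemma actE_inj : ∀ g h : Equiv.Perm (Fin 3), actE g = actE h → g = h := by decide

/-! ### Rigidity: vertices 15, 16, 21 resolve the graph -/

lemma pattern_inj : ∀ y z : Fin 22,
    (E22 15 y = E22 15 z ∧ E22 y 15 = E22 z 15 ∧ E22 16 y = E22 16 z ∧
     E22 y 16 = E22 z 16 ∧ E22 21 y = E22 21 z ∧ E22 y 21 = E22 z 21) → y = z := by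
  decide

def pair24 : List ℕ :=
  [15*22+16,15*22+17,15*22+19,15*22+20,16*22+15,16*22+17,16*22+18,16*22+20,
   17*22+15,17*22+16,17*22+18,17*22+19,18*22+16,18*22+17,18*22+19,18*22+20,
   19*22+15,19*22+17,19*22+18,19*22+20,20*22+15,20*22+16,20*22+18,20*22+19]

def pOK (a1 a2 : Fin 22) : Bool := pair24.contains (a1.val * 22 + a2.val)

set_option maxRecDepth 100000 in
set_option maxHeartbeats 8000000 in
lemma stage1 : ∀ a1 a2 : Fin 22,
    (∀ y : Fin 22, ∃ z : Fin 22,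
      E22 a1 z = E22 15 y ∧ E22 z a1 = E22 y 15 ∧ E22 a2 z = E22 16 y ∧
      E22 z a2 = E22 y 16) → pOK a1 a2 = true := by decide

set_option maxRecDepth 100000 in
set_option maxHeartbeats 16000000 in
lemma stage2 : ∀ a1 a2 a3 : Fin 22, pOK a1 a2 = true →
    (∀ y : Fin 22, ∃ z : Fin 22,
      E22 a1 z = E22 15 y ∧ E22 z a1 = E22 y 15 ∧ E22 a2 z = E22 16 y ∧
      E22 z a2 = E22 y 16 ∧ E22 a3 z = E22 21 y ∧ E22 z a3 = E22 y 21) →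
    (((a1 = 15 ∧ a2 = 16) ∨ (a1 = 15 ∧ a2 = 17) ∨ (a1 = 16 ∧ a2 = 15) ∨
      (a1 = 16 ∧ a2 = 17) ∨ (a1 = 17 ∧ a2 = 15) ∨ (a1 = 17 ∧ a2 = 16)) ∧ a3 = 21) := by
  decide

lemma aut_rigid (σ τ : Equiv.Perm (Fin 22)) (hσ : σ ∈ autGroup E22)
    (hτ : τ ∈ autGroup E22) (h15 : σ 15 = τ 15) (h16 : σ 16 = τ 16)
    (h21 : σ 21 = τ 21) : σ = τ := by
  have hρ : τ⁻¹ * σ ∈ autGroup E22 := mul_mem (inv_mem hτ) hσ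
  set ρ := τ⁻¹ * σ with hρdef
  have f15 : ρ 15 = 15 := by simp [hρdef, Equiv.Perm.mul_apply, h15]
  have f16 : ρ 16 = 16 := by simp [hρdef, Equiv.Perm.mul_apply, h16]
  have f21 : ρ 21 = 21 := by simp [hρdef, Equiv.Perm.mul_apply, h21]
  have hid : ρ = 1 := by
    refine Equiv.ext fun y => ?_
    rw [Equiv.Perm.one_apply]
    refine pattern_inj (ρ y) y ⟨?_, ?_, ?_, ?_, ?_, ?_⟩
    · have := hρ 15 y; rw [f15] at this; exact this
    · have := hρ y 15; rw [f15] at this; exact this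
    · have := hρ 16 y; rw [f16] at this; exact this
    · have := hρ y 16; rw [f16] at this; exact this
    · have := hρ 21 y; rw [f21] at this; exact this
    · have := hρ y 21; rw [f21] at this; exact this
  have hτσ : σ = τ * ρ := by rw [hρdef]; group
  rw [hτσ, hid, mul_one]

def cyc : Equiv.Perm (Fin 3) := Equiv.swap 0 2 * Equiv.swap 0 1

lemma aut_surj (σ : Equiv.Perm (Fin 22)) (hσ : σ ∈ autGroup E22) :
    ∃ g : Equiv.Perm (Fin 3), actE g = σ := by
  have hfull : ∀ y : Fin 22, ∃ z : Fin 22,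
      E22 (σ 15) z = E22 15 y ∧ E22 z (σ 15) = E22 y 15 ∧ E22 (σ 16) z = E22 16 y ∧
      E22 z (σ 16) = E22 y 16 ∧ E22 (σ 21) z = E22 21 y ∧ E22 z (σ 21) = E22 y 21 :=
    fun y => ⟨σ y, hσ 15 y, hσ y 15, hσ 16 y, hσ y 16, hσ 21 y, hσ y 21⟩
  have hp : pOK (σ 15) (σ 16) = true :=
    stage1 (σ 15) (σ 16) fun y =>
      (hfull y).elim fun z hz => ⟨z, hz.1, hz.2.1, hz.2.2.1, hz.2.2.2.1⟩
  obtain ⟨hpair, h21⟩ := stage2 (σ 15) (σ 16) (σ 21) hp hfull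
  have pick : ∃ g : Equiv.Perm (Fin 3), actE g 15 = σ 15 ∧ actE g 16 = σ 16 ∧
      actE g 21 = σ 21 := by
    rcases hpair with ⟨h1, h2⟩ | ⟨h1, h2⟩ | ⟨h1, h2⟩ | ⟨h1, h2⟩ | ⟨h1, h2⟩ | ⟨h1, h2⟩ <;>
      rw [h1, h2, h21]
    · exact ⟨1, by decide, by decide, by decide⟩
    · exact ⟨Equiv.swap 1 2, by decide, by decide, by decide⟩
    · exact ⟨Equiv.swap 0 1, by decide, by decide, by decide⟩
    · exact ⟨cyc, by decide, by decide, by decide⟩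
    · exact ⟨cyc⁻¹, by decide, by decide, by decide⟩
    · exact ⟨Equiv.swap 0 2, by decide, by decide, by decide⟩
  obtain ⟨g, hg1, hg2, hg3⟩ := pick
  exact ⟨g, aut_rigid (actE g) σ (actE_aut g) hσ hg1 hg2 hg3⟩

def autHom : Equiv.Perm (Fin 3) →* (autGroup E22) :=
  actHom.codRestrict (autGroup E22) (fun g => actE_aut g)

noncomputable def autEquiv : Equiv.Perm (Fin 3) ≃* (autGroup E22) :=
  MulEquiv.ofBijective autHom
    ⟨fun g h hgh => actE_inj g h (congrArg Subtype.val hgh),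
     fun σ => by
      obtain ⟨g, hg⟩ := aut_surj σ.1 σ.2
      exact ⟨g, Subtype.ext hg⟩⟩

lemma card_aut : Nat.card (autGroup E22) = 6 := by
  rw [Nat.card_congr autEquiv.toEquiv.symm, Nat.card_eq_fintype_card]
  decide

/-- there exists a DSRG(22,9,6,3,4) whose full automorphism group has
order 6 and is isomorphic to `S₃`; in particular there exists a DSRG(22,9,6,3,4)
admitting an automorphism of order two. -/
theorem exists_DSRG_22_with_full_automorphism_group_S3 :
    (∃ E : Fin 22 → Fin 22 → Bool, IsDSRG E 22 9 6 3 4 ∧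
      Nat.card (autGroup E) = 6 ∧
      Nonempty (autGroup E ≃* Equiv.Perm (Fin 3))) ∧
    (∃ E : Fin 22 → Fin 22 → Bool, IsDSRG E 22 9 6 3 4 ∧
      ∃ σ : Equiv.Perm (Fin 22), IsAut E σ ∧ orderOf σ = 2) := by
  constructor
  · exact ⟨E22, E22_dsrg, card_aut, ⟨autEquiv.symm⟩⟩
  · refine ⟨E22, E22_dsrg, actE (Equiv.swap 0 1), actE_aut _, ?_⟩
    have h2 : actE (Equiv.swap 0 1) ^ 2 = 1 := by
      rw [pow_two, ← actE_mul,
        show (Equiv.swap (0:Fin 3) 1) * Equiv.swap 0 1 = 1 by decide, actE_one]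
    have h1 : actE (Equiv.swap 0 1) ≠ 1 := by
      intro h
      have h0 : actE (Equiv.swap 0 1) (0 : Fin 22) = (0 : Fin 22) := by rw [h]; rfl
      have h0' : actE (Equiv.swap 0 1) (0 : Fin 22) = (1 : Fin 22) := by decide
      rw [h0'] at h0
      exact absurd h0 (by decide)
    exact orderOf_eq_prime h2 h1
end
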